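/- Let γ be a coloring of K_n^{6,4} (the complete multigraph on n vertices with 6 copies of each edge and 4 self-loops per vertex) with Z²-rank k. The set function f(G') = n' + rk_{Z²}(G',γ) − c' on edge-subsets G' (with n' vertices spanned, c' connected components) satisfies: adding any single colored edge ij not in G' changes f by exactly 0 or 1. -/

import Mathlib

open Finset

section Defs
variable {V E : Type} [Fintype V] [DecidableEq V] [Fintype E] [DecidableEq E]

/-- Signed incidence of edge `e` at vertex `v`. -/
def incid (th hd : E → V) (e : E) (v : V) : ℤ :=
  (if hd e = v then 1 else 0) - (if th e = v then 1 else 0)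

/-- `x : E → ℤ` is a cycle (1-chain with zero boundary) supported on the edge set `S`. -/
def IsCycle (th hd : E → V) (S : Finset E) (x : E → ℤ) : Prop :=
  (∀ e ∉ S, x e = 0) ∧ ∀ v : V, ∑ e, x e * incid th hd e v = 0

/-- Signed color-sum of a chain. -/
def rho (γ : E → ℤ × ℤ) (x : E → ℤ) : ℤ × ℤ := ∑ e, x e • γ e

def q2 (p : ℤ × ℤ) : ℚ × ℚ := ((p.1 : ℚ), (p.2 : ℚ))

/-- The ℤ²-rank of the colored subgraph with edge set `S`. -/
noncomputable def zrank (th hd : E → V) (γ : E → ℤ × ℤ) (S : Finset E) : ℕ :=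
  Module.finrank ℚ (Submodule.span ℚ (q2 '' (rho γ '' {x | IsCycle th hd S x})))

/-- Adjacency via an edge in `S`. -/
def adjS (th hd : E → V) (S : Finset E) (u v : V) : Prop :=
  ∃ e ∈ S, (th e = u ∧ hd e = v) ∨ (th e = v ∧ hd e = u)

/-- Vertices spanned by the edge set `S`. -/
def verts (th hd : E → V) (S : Finset E) : Finset V := S.image th ∪ S.image hd

/-- Number of connected components of the subgraph induced by the edge set `S`
(on the vertices it spans). -/
noncomputable def ncomp (th hd : E → V) (S : Finset E) : ℕ :=
  Nat.card (Quotient (Relation.EqvGen.setoid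
    (fun a b : {v : V // v ∈ verts th hd S} => adjS th hd S a.1 b.1)))

/-- The subgraph with edge set `S` is connected and spans all vertices. -/
def Conn (th hd : E → V) (S : Finset E) : Prop :=
  ∀ u v : V, Relation.EqvGen (adjS th hd S) u v

/-- The function `f(G') = n' + rk_{ℤ²}(G') − c'`. -/
noncomputable def fZ (th hd : E → V) (γ : E → ℤ × ℤ) (S : Finset E) : ℤ :=
  ((verts th hd S).card : ℤ) + (zrank th hd γ S : ℤ) - (ncomp th hd S : ℤ)

end Defs


set_option linter.unusedSectionVars false
section Proof
variable {V E : Type} [Fintype V] [DecidableEq V] [Fintype E] [DecidableEq E]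

lemma eqvgen_congr {α : Type*} {β : Sort*} {r : α → α → Prop} {f : α → β}
    (hf : ∀ a b, r a b → f a = f b) {a b : α} (h : Relation.EqvGen r a b) : f a = f b := by
  induction h with
  | rel a b h => exact hf a b h
  | refl a => rfl
  | symm a b _ ih => exact ih.symm
  | trans a c b _ _ ih1 ih2 => exact ih1.trans ih2

lemma eqvgen_out {α : Type*} {r s : α → α → Prop} (hrs : ∀ a b, r a b → Relation.EqvGen s a b)
    {a b : α} (h : Relation.EqvGen r a b) : Relation.EqvGen s a b := by
  induction h with
  | rel a b h => exact hrs a b h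
  | refl a => exact Relation.EqvGen.refl a
  | symm a b _ ih => exact Relation.EqvGen.symm _ _ ih
  | trans a c b _ _ ih1 ih2 => exact Relation.EqvGen.trans _ _ _ ih1 ih2

variable {th hd : E → V}

lemma adjS_mem {S : Finset E} {a b : V} (h : adjS th hd S a b) :
    a ∈ verts th hd S ∧ b ∈ verts th hd S := by
  obtain ⟨f, hf, ⟨h1, h2⟩ | ⟨h1, h2⟩⟩ := h
  · exact ⟨Finset.mem_union_left _ (Finset.mem_image.2 ⟨f, hf, h1⟩),
      Finset.mem_union_right _ (Finset.mem_image.2 ⟨f, hf, h2⟩)⟩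
  · exact ⟨Finset.mem_union_right _ (Finset.mem_image.2 ⟨f, hf, h2⟩),
      Finset.mem_union_left _ (Finset.mem_image.2 ⟨f, hf, h1⟩)⟩

lemma eqvgen_mem {S : Finset E} {a b : V} (h : Relation.EqvGen (adjS th hd S) a b) :
    a = b ∨ (a ∈ verts th hd S ∧ b ∈ verts th hd S) := by
  induction h with
  | rel a b h => exact Or.inr (adjS_mem h)
  | refl a => exact Or.inl rfl
  | symm a b _ ih =>
      rcases ih with h | h
      · exact Or.inl h.symm
      · exact Or.inr ⟨h.2, h.1⟩
  | trans a c b _ _ ih1 ih2 =>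
      rcases ih1 with rfl | h1
      · exact ih2
      · rcases ih2 with rfl | h2
        · exact Or.inr h1
        · exact Or.inr ⟨h1.1, h2.2⟩

lemma eqvgen_restrict {S : Finset E} {a b : V} (h : Relation.EqvGen (adjS th hd S) a b) :
    a = b ∨ ∀ (ha : a ∈ verts th hd S) (hb : b ∈ verts th hd S),
      Relation.EqvGen (fun p q : {v : V // v ∈ verts th hd S} => adjS th hd S p.1 q.1)
        ⟨a, ha⟩ ⟨b, hb⟩ := by
  induction h with
  | rel a b h => exact Or.inr fun ha hb => Relation.EqvGen.rel _ _ h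
  | refl a => exact Or.inl rfl
  | symm a b _ ih =>
      rcases ih with rfl | ih
      · exact Or.inl rfl
      · exact Or.inr fun ha hb => Relation.EqvGen.symm _ _ (ih hb ha)
  | trans a c b hac hcb ih1 ih2 =>
      rcases eqvgen_mem hac with rfl | ⟨hma, hmc⟩
      · exact ih2
      rcases ih1 with rfl | ih1
      · exact ih2
      rcases ih2 with rfl | ih2
      · exact Or.inr fun ha hb => ih1 ha hb
      · exact Or.inr fun ha hb =>
          Relation.EqvGen.trans _ _ _ (ih1 ha hmc) (ih2 hmc hb)

/-- The canonical map to the (unrestricted) component quotient. -/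
def mkc (th hd : E → V) (S : Finset E) :
    V → Quotient (Relation.EqvGen.setoid (adjS th hd S)) :=
  Quotient.mk _

noncomputable local instance quotDecEq (th hd : E → V) (S : Finset E) :
    DecidableEq (Quotient (Relation.EqvGen.setoid (adjS th hd S))) := Classical.decEq _

/-- Finset of components, as image of the spanned vertices. -/
noncomputable def comps (th hd : E → V) (S : Finset E) :
    Finset (Quotient (Relation.EqvGen.setoid (adjS th hd S))) :=
  (verts th hd S).image (mkc th hd S)

lemma mkc_eq_iff {S : Finset E} {a b : V} :
    mkc th hd S a = mkc th hd S b ↔ Relation.EqvGen (adjS th hd S) a b :=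
  ⟨fun h => Quotient.exact h, fun h => Quotient.sound h⟩

lemma ncomp_eq (th hd : E → V) (S : Finset E) :
    ncomp th hd S = (comps th hd S).card := by
  have F : Quotient (Relation.EqvGen.setoid
      (fun a b : {v : V // v ∈ verts th hd S} => adjS th hd S a.1 b.1)) ≃
      {q // q ∈ comps th hd S} := by
    refine Equiv.ofBijective
      (Quotient.lift (fun w => (⟨mkc th hd S w.1,
        Finset.mem_image_of_mem _ w.2⟩ : {q // q ∈ comps th hd S}))
        (fun a b hab => Subtype.ext (eqvgen_congr
          (f := fun w : {v : V // v ∈ verts th hd S} => mkc th hd S w.1)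
          (fun a b hab => Quotient.sound (Relation.EqvGen.rel a.1 b.1 hab)) hab))) ⟨?_, ?_⟩
    · intro q1 q2
      refine Quotient.inductionOn₂ q1 q2 (fun a b h => ?_)
      have h2 : Relation.EqvGen (adjS th hd S) a.1 b.1 :=
        Quotient.exact (congrArg Subtype.val h)
      rcases eqvgen_restrict h2 with heq | hr
      · exact congrArg _ (Subtype.ext heq)
      · exact Quotient.sound (hr a.2 b.2)
    · rintro ⟨q, hq⟩
      obtain ⟨w, hw, rfl⟩ := Finset.mem_image.1 hq
      exact ⟨Quotient.mk _ ⟨w, hw⟩, rfl⟩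
  rw [ncomp, Nat.card_congr F, Nat.card_eq_finsetCard]

/-- Projection between component quotients when the edge set grows. -/
def qproj (th hd : E → V) (S : Finset E) (e : E) :
    Quotient (Relation.EqvGen.setoid (adjS th hd S)) →
    Quotient (Relation.EqvGen.setoid (adjS th hd (insert e S))) :=
  Quotient.lift (mkc th hd (insert e S))
    (fun a b hab => Quotient.sound (eqvgen_out
      (fun a b h => Relation.EqvGen.rel a b (by
        obtain ⟨f, hf, hc⟩ := h
        exact ⟨f, Finset.mem_insert_of_mem hf, hc⟩)) hab))

lemma qproj_mkc {S : Finset E} {e : E} (a : V) :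
    qproj th hd S e (mkc th hd S a) = mkc th hd (insert e S) a := rfl

lemma verts_insert (th hd : E → V) (S : Finset E) (e : E) :
    verts th hd (insert e S) = insert (th e) (insert (hd e) (verts th hd S)) := by
  ext w
  simp only [verts, Finset.image_insert, Finset.mem_union, Finset.mem_insert]
  tauto

/-- Decomposition of connectivity after inserting one edge. -/
lemma eqvgen_insert {S : Finset E} {e : E} {a b : V}
    (h : Relation.EqvGen (adjS th hd (insert e S)) a b) :
    Relation.EqvGen (adjS th hd S) a b ∨
    (Relation.EqvGen (adjS th hd S) a (th e) ∧ Relation.EqvGen (adjS th hd S) (hd e) b) ∨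
    (Relation.EqvGen (adjS th hd S) a (hd e) ∧ Relation.EqvGen (adjS th hd S) (th e) b) := by
  have E1 := Relation.EqvGen.is_equivalence (adjS th hd S)
  induction h with
  | rel a b h =>
      obtain ⟨f, hf, hc⟩ := h
      rcases Finset.mem_insert.1 hf with rfl | hf
      · rcases hc with ⟨h1, h2⟩ | ⟨h1, h2⟩
        · subst h1; subst h2; exact Or.inr (Or.inl ⟨E1.refl _, E1.refl _⟩)
        · subst h1; subst h2; exact Or.inr (Or.inr ⟨E1.refl _, E1.refl _⟩)
      · exact Or.inl (Relation.EqvGen.rel _ _ ⟨f, hf, hc⟩)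
  | refl a => exact Or.inl (E1.refl a)
  | symm a b _ ih =>
      rcases ih with h | ⟨h1, h2⟩ | ⟨h1, h2⟩
      · exact Or.inl (E1.symm h)
      · exact Or.inr (Or.inr ⟨E1.symm h2, E1.symm h1⟩)
      · exact Or.inr (Or.inl ⟨E1.symm h2, E1.symm h1⟩)
  | trans a c b _ _ ih1 ih2 =>
      rcases ih1 with h | ⟨h1, h2⟩ | ⟨h1, h2⟩ <;>
        rcases ih2 with g | ⟨g1, g2⟩ | ⟨g1, g2⟩
      · exact Or.inl (E1.trans h g)
      · exact Or.inr (Or.inl ⟨E1.trans h g1, g2⟩)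
      · exact Or.inr (Or.inr ⟨E1.trans h g1, g2⟩)
      · exact Or.inr (Or.inl ⟨h1, E1.trans h2 g⟩)
      · exact Or.inl (E1.trans (E1.trans h1 (E1.symm (E1.trans h2 g1))) g2)
      · exact Or.inl (E1.trans h1 g2)
      · exact Or.inr (Or.inr ⟨h1, E1.trans h2 g⟩)
      · exact Or.inl (E1.trans h1 g2)
      · exact Or.inl (E1.trans (E1.trans h1 (E1.symm (E1.trans h2 g1))) g2)

lemma mkc_insert_uv (th hd : E → V) (S : Finset E) (e : E) :
    mkc th hd (insert e S) (th e) = mkc th hd (insert e S) (hd e) :=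
  Quotient.sound (Relation.EqvGen.rel _ _
    ⟨e, Finset.mem_insert_self e S, Or.inl ⟨rfl, rfl⟩⟩)

lemma qproj_eq {S : Finset E} {e : E}
    {q q' : Quotient (Relation.EqvGen.setoid (adjS th hd S))}
    (h : qproj th hd S e q = qproj th hd S e q') :
    q = q' ∨ (q = mkc th hd S (th e) ∧ q' = mkc th hd S (hd e)) ∨
      (q = mkc th hd S (hd e) ∧ q' = mkc th hd S (th e)) := by
  revert h
  refine Quotient.inductionOn₂ q q' (fun a b h => ?_)
  have h2 : Relation.EqvGen (adjS th hd (insert e S)) a b := Quotient.exact h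
  rcases eqvgen_insert h2 with h3 | ⟨h3, h4⟩ | ⟨h3, h4⟩
  · exact Or.inl (Quotient.sound h3)
  · exact Or.inr (Or.inl ⟨Quotient.sound h3, Quotient.sound
      (Relation.EqvGen.symm _ _ h4)⟩)
  · exact Or.inr (Or.inr ⟨Quotient.sound h3, Quotient.sound
      (Relation.EqvGen.symm _ _ h4)⟩)

lemma comps_insert (th hd : E → V) (S : Finset E) (e : E) :
    comps th hd (insert e S) =
      ((verts th hd (insert e S)).image (mkc th hd S)).image (qproj th hd S e) := by
  rw [comps, Finset.image_image]
  rfl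

/-- Both endpoints already spanned and connected: component count unchanged. -/
lemma ncomp_insert_conn {S : Finset E} {e : E}
    (hu : th e ∈ verts th hd S) (hv : hd e ∈ verts th hd S)
    (hR : Relation.EqvGen (adjS th hd S) (th e) (hd e)) :
    ncomp th hd (insert e S) = ncomp th hd S := by
  have hinj : Function.Injective (qproj th hd S e) := by
    intro q q' h
    rcases qproj_eq h with h | ⟨h1, h2⟩ | ⟨h1, h2⟩
    · exact h
    · rw [h1, h2]; exact Quotient.sound hR
    · rw [h1, h2]; exact Quotient.sound (Relation.EqvGen.symm _ _ hR)
  have hV : verts th hd (insert e S) = verts th hd S := by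
    rw [verts_insert, Finset.insert_eq_self.2 hv, Finset.insert_eq_self.2 hu]
  rw [ncomp_eq, ncomp_eq, comps_insert, hV, Finset.card_image_of_injective _ hinj, comps]

/-- Both endpoints spanned but in different components: count drops by one. -/
lemma ncomp_insert_merge {S : Finset E} {e : E}
    (hu : th e ∈ verts th hd S) (hv : hd e ∈ verts th hd S)
    (hR : ¬ Relation.EqvGen (adjS th hd S) (th e) (hd e)) :
    ncomp th hd S = ncomp th hd (insert e S) + 1 := by
  have hV : verts th hd (insert e S) = verts th hd S := by
    rw [verts_insert, Finset.insert_eq_self.2 hv, Finset.insert_eq_self.2 hu]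
  have hne : mkc th hd S (th e) ≠ mkc th hd S (hd e) := fun h => hR (Quotient.exact h)
  rw [ncomp_eq, ncomp_eq]
  set A := comps th hd S with hA
  have huA : mkc th hd S (th e) ∈ A := Finset.mem_image_of_mem _ hu
  have hvA : mkc th hd S (hd e) ∈ A := Finset.mem_image_of_mem _ hv
  have himg : A.image (qproj th hd S e) = (A.erase (mkc th hd S (hd e))).image (qproj th hd S e) := by
    apply Finset.Subset.antisymm
    · intro x hx
      obtain ⟨q, hq, rfl⟩ := Finset.mem_image.1 hx
      by_cases hqv : q = mkc th hd S (hd e)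
      · subst hqv
        refine Finset.mem_image.2 ⟨mkc th hd S (th e), Finset.mem_erase.2 ⟨hne, huA⟩, ?_⟩
        rw [qproj_mkc, qproj_mkc, mkc_insert_uv]
      · exact Finset.mem_image.2 ⟨q, Finset.mem_erase.2 ⟨hqv, hq⟩, rfl⟩
    · exact Finset.image_subset_image (Finset.erase_subset _ _)
  have hinj : Set.InjOn (qproj th hd S e) (A.erase (mkc th hd S (hd e))) := by
    intro x hx y hy h
    rcases qproj_eq h with h | ⟨h1, h2⟩ | ⟨h1, h2⟩
    · exact h
    · exact absurd (Finset.mem_erase.1 (by rwa [← h2] at hy)).1 (fun hc => hc rfl)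
    · exact absurd (Finset.mem_erase.1 (by rwa [← h1] at hx)).1 (fun hc => hc rfl)
  have hcard : (comps th hd (insert e S)).card = A.card - 1 := by
    rw [comps_insert, hV]
    show (Finset.image (qproj th hd S e) A).card = A.card - 1
    rw [himg, Finset.card_image_of_injOn hinj, Finset.card_erase_of_mem hvA]
  have hpos : 0 < A.card := Finset.card_pos.2 ⟨_, huA⟩
  rw [hcard]
  omega

lemma comps_def (th hd : E → V) (S : Finset E) :
    (verts th hd S).image (mkc th hd S) = comps th hd S := rfl

lemma mkc_notin_comps {S : Finset E} {w : V} (hw : w ∉ verts th hd S) :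
    mkc th hd S w ∉ comps th hd S := by
  intro hmem
  obtain ⟨z, hz, hzw⟩ := Finset.mem_image.1 hmem
  rcases eqvgen_mem (Quotient.exact hzw) with rfl | ⟨_, hw2⟩
  · exact hw hz
  · exact hw hw2

/-- One endpoint new: component count unchanged. -/
lemma ncomp_insert_pendant {S : Finset E} {e : E}
    (hu : th e ∈ verts th hd S) (hv : hd e ∉ verts th hd S) :
    ncomp th hd (insert e S) = ncomp th hd S := by
  have hV : verts th hd (insert e S) = insert (hd e) (verts th hd S) := by
    rw [verts_insert, Finset.insert_comm, Finset.insert_eq_self.2 hu]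
  rw [ncomp_eq, ncomp_eq]
  have hinj : Set.InjOn (qproj th hd S e) ↑(comps th hd S) := by
    intro x hx y hy h
    rcases qproj_eq h with h | ⟨h1, h2⟩ | ⟨h1, h2⟩
    · exact h
    · exact absurd (h2 ▸ hy) (mkc_notin_comps hv)
    · exact absurd (h1 ▸ hx) (mkc_notin_comps hv)
  have hmem : qproj th hd S e (mkc th hd S (hd e)) ∈
      (comps th hd S).image (qproj th hd S e) := by
    refine Finset.mem_image.2 ⟨mkc th hd S (th e), Finset.mem_image_of_mem _ hu, ?_⟩
    rw [qproj_mkc, qproj_mkc, mkc_insert_uv]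
  have himg : comps th hd (insert e S) = (comps th hd S).image (qproj th hd S e) := by
    rw [comps_insert, hV]
    simp only [Finset.image_insert]
    rw [comps_def, Finset.insert_eq_self.2 hmem]
  rw [himg, Finset.card_image_of_injOn hinj]

/-- Two new endpoints, distinct: component count increases by one. -/
lemma ncomp_insert_new2 {S : Finset E} {e : E} (hne : th e ≠ hd e)
    (hu : th e ∉ verts th hd S) (hv : hd e ∉ verts th hd S) :
    ncomp th hd (insert e S) = ncomp th hd S + 1 := by
  rw [ncomp_eq, ncomp_eq]
  have hxu : ∀ x ∈ insert (mkc th hd S (hd e)) (comps th hd S),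
      x ≠ mkc th hd S (th e) := by
    intro x hx hc
    rcases Finset.mem_insert.1 hx with rfl | hx
    · rcases eqvgen_mem (Quotient.exact hc) with h | ⟨h, _⟩
      · exact hne h.symm
      · exact hv h
    · exact mkc_notin_comps hu (hc ▸ hx)
  have hinj : Set.InjOn (qproj th hd S e)
      ↑(insert (mkc th hd S (hd e)) (comps th hd S)) := by
    intro x hx y hy h
    rcases qproj_eq h with h | ⟨h1, h2⟩ | ⟨h1, h2⟩
    · exact h
    · exact absurd h1 (hxu x hx)
    · exact absurd h2 (hxu y hy)
  have hab : qproj th hd S e (mkc th hd S (th e)) = qproj th hd S e (mkc th hd S (hd e)) := by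
    rw [qproj_mkc, qproj_mkc, mkc_insert_uv]
  have himg : comps th hd (insert e S) =
      (insert (mkc th hd S (hd e)) (comps th hd S)).image (qproj th hd S e) := by
    rw [comps_insert, verts_insert]
    simp only [Finset.image_insert]
    rw [comps_def, hab, Finset.insert_idem]
  rw [himg, Finset.card_image_of_injOn hinj,
    Finset.card_insert_of_notMem (mkc_notin_comps hv)]

/-- A loop at a new vertex: component count increases by one. -/
lemma ncomp_insert_loopnew {S : Finset E} {e : E} (hl : th e = hd e)
    (hu : th e ∉ verts th hd S) :
    ncomp th hd (insert e S) = ncomp th hd S + 1 := by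
  rw [ncomp_eq, ncomp_eq]
  have hinj : Set.InjOn (qproj th hd S e)
      ↑(insert (mkc th hd S (th e)) (comps th hd S)) := by
    intro x hx y hy h
    rcases qproj_eq h with h | ⟨h1, h2⟩ | ⟨h1, h2⟩
    · exact h
    · rw [h1, h2, hl]
    · rw [h1, h2, hl]
  have himg : comps th hd (insert e S) =
      (insert (mkc th hd S (th e)) (comps th hd S)).image (qproj th hd S e) := by
    rw [comps_insert, verts_insert, ← hl, Finset.insert_idem]
    simp only [Finset.image_insert]
    rw [comps_def]
  rw [himg, Finset.card_image_of_injOn hinj,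
    Finset.card_insert_of_notMem (mkc_notin_comps hu)]

lemma IsCycle.mono {S T : Finset E} (hST : S ⊆ T) {x : E → ℤ} (h : IsCycle th hd S x) :
    IsCycle th hd T x :=
  ⟨fun f hf => h.1 f (fun hfS => hf (hST hfS)), h.2⟩

lemma zrank_mono (γ : E → ℤ × ℤ) {S T : Finset E} (hST : S ⊆ T) :
    zrank th hd γ S ≤ zrank th hd γ T :=
  Submodule.finrank_mono (Submodule.span_mono
    (Set.image_mono (Set.image_mono (fun _ hx => IsCycle.mono hST hx))))

lemma cycle_zero_on_cut {S : Finset E} {e : E} (A : Finset V)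
    (hclosed : ∀ f ∈ S, (th f ∈ A ↔ hd f ∈ A))
    (hcut : ¬ (th e ∈ A ↔ hd e ∈ A))
    {x : E → ℤ} (hx : IsCycle th hd (insert e S) x) : x e = 0 := by
  have h0 : ∑ f, x f * ((if hd f ∈ A then (1:ℤ) else 0) - (if th f ∈ A then 1 else 0))
      = 0 := by
    have h1 := Finset.sum_eq_zero (fun v (_ : v ∈ A) => hx.2 v)
    rw [Finset.sum_comm] at h1
    calc ∑ f, x f * ((if hd f ∈ A then (1:ℤ) else 0) - (if th f ∈ A then 1 else 0))
        = ∑ f, ∑ v ∈ A, x f * incid th hd f v := by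
          refine Finset.sum_congr rfl fun f _ => ?_
          rw [← Finset.mul_sum]
          congr 1
          unfold incid
          rw [Finset.sum_sub_distrib, Finset.sum_ite_eq, Finset.sum_ite_eq]
      _ = 0 := h1
  rw [Finset.sum_eq_single e (fun f _ hfe => ?_) (fun h => absurd (Finset.mem_univ e) h)]
    at h0
  · rcases mul_eq_zero.1 h0 with h | h
    · exact h
    · exfalso
      by_cases hA : th e ∈ A <;> by_cases hB : hd e ∈ A <;> simp [hA, hB] at h hcut
  · by_cases hfS : f ∈ S
    · by_cases hA : th f ∈ A
      · simp [hA, (hclosed f hfS).1 hA]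
      · have hB : hd f ∉ A := fun h => hA ((hclosed f hfS).2 h)
        simp [hA, hB]
    · rw [hx.1 f (by simp [hfe, hfS]), zero_mul]

lemma zrank_insert_eq_of_zero (γ : E → ℤ × ℤ) {S : Finset E} {e : E}
    (h : ∀ x, IsCycle th hd (insert e S) x → x e = 0) :
    zrank th hd γ (insert e S) = zrank th hd γ S := by
  have hset : {x | IsCycle th hd (insert e S) x} = {x | IsCycle th hd S x} := by
    ext x
    constructor
    · intro hx
      refine ⟨fun f hf => ?_, hx.2⟩
      by_cases hfe : f = e
      · subst hfe; exact h x hx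
      · exact hx.1 f (by simp [hfe, hf])
    · intro hx; exact hx.mono (Finset.subset_insert e S)
  unfold zrank
  rw [hset]

lemma zrank_insert_eq_of_cut (γ : E → ℤ × ℤ) {S : Finset E} {e : E} (A : Finset V)
    (hclosed : ∀ f ∈ S, (th f ∈ A ↔ hd f ∈ A))
    (hcut : ¬ (th e ∈ A ↔ hd e ∈ A)) :
    zrank th hd γ (insert e S) = zrank th hd γ S :=
  zrank_insert_eq_of_zero γ (fun _ hx => cycle_zero_on_cut A hclosed hcut hx)

lemma rho_comb (γ : E → ℤ × ℤ) (a b : ℤ) (x y : E → ℤ) :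
    rho γ (fun f => a * x f - b * y f) = a • rho γ x - b • rho γ y := by
  unfold rho
  rw [Finset.smul_sum, Finset.smul_sum, ← Finset.sum_sub_distrib]
  refine Finset.sum_congr rfl fun f _ => ?_
  rw [sub_smul, mul_smul, mul_smul]

lemma q2_sub (p q : ℤ × ℤ) : q2 (p - q) = q2 p - q2 q := by
  unfold q2
  simp [Prod.ext_iff]

lemma q2_zsmul (n : ℤ) (p : ℤ × ℤ) : q2 (n • p) = (n : ℚ) • q2 p := by
  unfold q2
  simp [Prod.ext_iff]

lemma zrank_insert_le (γ : E → ℤ × ℤ) {S : Finset E} (e : E) :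
    zrank th hd γ (insert e S) ≤ zrank th hd γ S + 1 := by
  by_cases hex : ∃ x₀, IsCycle th hd (insert e S) x₀ ∧ x₀ e ≠ 0
  · obtain ⟨x₀, hx₀, hc⟩ := hex
    set w := q2 (rho γ x₀) with hw
    have hle : Submodule.span ℚ (q2 '' (rho γ '' {x | IsCycle th hd (insert e S) x})) ≤
        Submodule.span ℚ (q2 '' (rho γ '' {x | IsCycle th hd S x})) ⊔
          Submodule.span ℚ ({w} : Set (ℚ × ℚ)) := by
      rw [Submodule.span_le]
      rintro _ ⟨_, ⟨x, hx, rfl⟩, rfl⟩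
      have hy : IsCycle th hd S (fun f => x₀ e * x f - x e * x₀ f) := by
        constructor
        · intro f hf
          show x₀ e * x f - x e * x₀ f = 0
          by_cases hfe : f = e
          · subst hfe; ring
          · rw [hx.1 f (by simp [hfe, hf]), hx₀.1 f (by simp [hfe, hf])]
            ring
        · intro v
          calc ∑ f, (x₀ e * x f - x e * x₀ f) * incid th hd f v
              = x₀ e * ∑ f, x f * incid th hd f v -
                x e * ∑ f, x₀ f * incid th hd f v := by
                rw [Finset.mul_sum, Finset.mul_sum, ← Finset.sum_sub_distrib]
                exact Finset.sum_congr rfl fun f _ => by ring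
            _ = 0 := by rw [hx.2 v, hx₀.2 v]; ring
      have hcq : ((x₀ e : ℚ)) ≠ 0 := Int.cast_ne_zero.2 hc
      rw [SetLike.mem_coe, ← Submodule.smul_mem_iff _ hcq]
      have heq : (x₀ e : ℚ) • q2 (rho γ x) =
          q2 (rho γ (fun f => x₀ e * x f - x e * x₀ f)) + (x e : ℚ) • w := by
        rw [rho_comb, q2_sub, q2_zsmul, q2_zsmul, hw, sub_add_cancel]
      rw [heq]
      refine Submodule.add_mem _ ?_ ?_
      · exact Submodule.mem_sup_left (Submodule.subset_span ⟨_, ⟨_, hy, rfl⟩, rfl⟩)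
      · exact Submodule.smul_mem _ _
          (Submodule.mem_sup_right (Submodule.subset_span rfl))
    have h1 : zrank th hd γ (insert e S) ≤ Module.finrank ℚ
        ↥((Submodule.span ℚ (q2 '' (rho γ '' {x | IsCycle th hd S x}))) ⊔
          Submodule.span ℚ ({w} : Set (ℚ × ℚ))) := Submodule.finrank_mono hle
    have h2 := Submodule.finrank_add_le_finrank_add_finrank
      (Submodule.span ℚ (q2 '' (rho γ '' {x | IsCycle th hd S x})))
      (Submodule.span ℚ ({w} : Set (ℚ × ℚ)))
    have h3 : Module.finrank ℚ (Submodule.span ℚ ({w} : Set (ℚ × ℚ))) ≤ 1 := by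
      have := finrank_span_le_card (R := ℚ) ({w} : Set (ℚ × ℚ))
      simpa using this
    have h4 : Module.finrank ℚ
        (Submodule.span ℚ (q2 '' (rho γ '' {x | IsCycle th hd S x}))) =
        zrank th hd γ S := rfl
    omega
  · push_neg at hex
    rw [zrank_insert_eq_of_zero γ (fun x hx => hex x hx)]
    omega

lemma adjS_swap (th hd : E → V) (S : Finset E) : adjS hd th S = adjS th hd S := by
  funext a b
  unfold adjS
  apply propext
  constructor <;> (rintro ⟨f, hf, h⟩; exact ⟨f, hf, by tauto⟩)

lemma verts_swap (th hd : E → V) (S : Finset E) : verts hd th S = verts th hd S := by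
  unfold verts
  exact Finset.union_comm _ _

lemma ncomp_swap (th hd : E → V) (S : Finset E) : ncomp hd th S = ncomp th hd S := by
  unfold ncomp
  rw [adjS_swap th hd S, verts_swap th hd S]

lemma IsCycle_swap (th hd : E → V) (S : Finset E) :
    IsCycle hd th S = IsCycle th hd S := by
  funext x
  apply propext
  have key : ∀ v, (∑ f, x f * incid hd th f v) = -∑ f, x f * incid th hd f v := by
    intro v
    rw [← Finset.sum_neg_distrib]
    refine Finset.sum_congr rfl fun f _ => ?_
    unfold incid
    ring
  constructor <;> intro h <;> refine ⟨h.1, fun v => ?_⟩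
  · have := h.2 v
    rw [key v, neg_eq_zero] at this
    exact this
  · rw [key v, h.2 v, neg_zero]

lemma zrank_swap (th hd : E → V) (γ : E → ℤ × ℤ) (S : Finset E) :
    zrank hd th γ S = zrank th hd γ S := by
  unfold zrank
  rw [show {x | IsCycle hd th S x} = {x | IsCycle th hd S x} by rw [IsCycle_swap]]

lemma fZ_swap (th hd : E → V) (γ : E → ℤ × ℤ) (S : Finset E) :
    fZ hd th γ S = fZ th hd γ S := by
  unfold fZ
  rw [ncomp_swap, verts_swap, zrank_swap]

noncomputable local instance cutDec (th hd : E → V) (S : Finset E) (e : E) :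
    DecidablePred (fun w => Relation.EqvGen (adjS th hd S) (th e) w) :=
  fun _ => Classical.propDecidable _

/-- The connected component of `th e` as a Finset, used as a cut. -/
noncomputable def cutset (th hd : E → V) (S : Finset E) (e : E) : Finset V :=
  Finset.univ.filter (fun w => Relation.EqvGen (adjS th hd S) (th e) w)

lemma mem_cutset {S : Finset E} {e : E} {w : V} :
    w ∈ cutset th hd S e ↔ Relation.EqvGen (adjS th hd S) (th e) w := by
  unfold cutset
  rw [Finset.mem_filter]
  simp

lemma cutset_closed {S : Finset E} {e : E} :
    ∀ f ∈ S, (th f ∈ cutset th hd S e ↔ hd f ∈ cutset th hd S e) := by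
  intro f hf
  have hadj : Relation.EqvGen (adjS th hd S) (th f) (hd f) :=
    Relation.EqvGen.rel _ _ ⟨f, hf, Or.inl ⟨rfl, rfl⟩⟩
  rw [mem_cutset, mem_cutset]
  constructor
  · intro h; exact Relation.EqvGen.trans _ _ _ h hadj
  · intro h; exact Relation.EqvGen.trans _ _ _ h (Relation.EqvGen.symm _ _ hadj)

lemma cutset_cut {S : Finset E} {e : E}
    (h : ¬ Relation.EqvGen (adjS th hd S) (th e) (hd e)) :
    ¬ (th e ∈ cutset th hd S e ↔ hd e ∈ cutset th hd S e) := by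
  rw [mem_cutset, mem_cutset]
  intro hiff
  exact h (hiff.1 (Relation.EqvGen.refl _))

/-- The pendant case, isolated for use under th/hd symmetry. -/
lemma step_pendant (th hd : E → V) (γ : E → ℤ × ℤ) {S : Finset E} {e : E}
    (hu : th e ∈ verts th hd S) (hv : hd e ∉ verts th hd S) :
    fZ th hd γ (insert e S) - fZ th hd γ S = 1 := by
  have hRuv : ¬ Relation.EqvGen (adjS th hd S) (th e) (hd e) := by
    intro h
    rcases eqvgen_mem h with heq | ⟨_, hmem⟩
    · exact hv (heq ▸ hu)
    · exact hv hmem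
  have hz := zrank_insert_eq_of_cut γ (cutset th hd S e) cutset_closed (cutset_cut hRuv)
  have hC := ncomp_insert_pendant hu hv
  have hV : verts th hd (insert e S) = insert (hd e) (verts th hd S) := by
    rw [verts_insert, Finset.insert_comm, Finset.insert_eq_self.2 hu]
  have hN : (verts th hd (insert e S)).card = (verts th hd S).card + 1 := by
    rw [hV, Finset.card_insert_of_notMem hv]
  unfold fZ
  rw [hz, hC, hN]
  push_cast
  ring

/-- The general single-edge step theorem. -/
theorem fZ_step (th hd : E → V) (γ : E → ℤ × ℤ) (S : Finset E) (e : E) (he : e ∉ S) :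
    fZ th hd γ (insert e S) - fZ th hd γ S = 0 ∨
    fZ th hd γ (insert e S) - fZ th hd γ S = 1 := by
  by_cases hu : th e ∈ verts th hd S
  · by_cases hv : hd e ∈ verts th hd S
    · have hV : verts th hd (insert e S) = verts th hd S := by
        rw [verts_insert, Finset.insert_eq_self.2 hv, Finset.insert_eq_self.2 hu]
      by_cases hR : Relation.EqvGen (adjS th hd S) (th e) (hd e)
      · have hC := ncomp_insert_conn hu hv hR
        have hr1 := zrank_mono (th := th) (hd := hd) γ (Finset.subset_insert e S)
        have hr2 := zrank_insert_le (th := th) (hd := hd) γ (S := S) e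
        unfold fZ
        rw [hV, hC]
        omega
      · have hC := ncomp_insert_merge hu hv hR
        have hz := zrank_insert_eq_of_cut γ (cutset th hd S e) cutset_closed
          (cutset_cut hR)
        unfold fZ
        rw [hV, hz]
        omega
    · exact Or.inr (step_pendant th hd γ hu hv)
  · by_cases hv : hd e ∈ verts th hd S
    · refine Or.inr ?_
      have h := step_pendant hd th γ (S := S) (e := e)
        (by rw [verts_swap th hd]; exact hv) (by rw [verts_swap th hd]; exact hu)
      rw [fZ_swap th hd γ (insert e S), fZ_swap th hd γ S] at h
      exact h
    · by_cases hloop : th e = hd e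
      · have hC := ncomp_insert_loopnew hloop hu
        have hV : verts th hd (insert e S) = insert (th e) (verts th hd S) := by
          rw [verts_insert, ← hloop, Finset.insert_idem]
        have hN : (verts th hd (insert e S)).card = (verts th hd S).card + 1 := by
          rw [hV, Finset.card_insert_of_notMem hu]
        have hr1 := zrank_mono (th := th) (hd := hd) γ (Finset.subset_insert e S)
        have hr2 := zrank_insert_le (th := th) (hd := hd) γ (S := S) e
        unfold fZ
        rw [hC, hN]
        omega
      · have hC := ncomp_insert_new2 hloop hu hv
        have hRuv : ¬ Relation.EqvGen (adjS th hd S) (th e) (hd e) := by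
          intro h
          rcases eqvgen_mem h with heq | ⟨hmem, _⟩
          · exact hloop heq
          · exact hu hmem
        have hz := zrank_insert_eq_of_cut γ (cutset th hd S e) cutset_closed
          (cutset_cut hRuv)
        have hne2 : th e ∉ insert (hd e) (verts th hd S) := by
          rw [Finset.mem_insert]
          rintro (h | h)
          · exact hloop h
          · exact hu h
        have hN : (verts th hd (insert e S)).card = (verts th hd S).card + 2 := by
          rw [verts_insert, Finset.card_insert_of_notMem hne2,
            Finset.card_insert_of_notMem hv]
        unfold fZ
        rw [hz, hC, hN]
        omega

end Proof

/-- Edge set of the complete multigraph `K_n^{6,4}`. -/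
def KE (n : ℕ) : Type :=
  ({p : Fin n × Fin n // p.1 < p.2} × Fin 6) ⊕ (Fin n × Fin 4)

instance (n : ℕ) : Fintype (KE n) := by unfold KE; infer_instance
instance (n : ℕ) : DecidableEq (KE n) := by unfold KE; infer_instance

def Kt (n : ℕ) : KE n → Fin n := Sum.elim (fun q => q.1.1.1) (fun q => q.1)
def Kh (n : ℕ) : KE n → Fin n := Sum.elim (fun q => q.1.1.2) (fun q => q.1)

/-- On `K_n^{6,4}` with a ℤ²-coloring of rank `k`, adding a single edge to an edge-subset
changes `f(G') = n' + rk_{ℤ²}(G') − c'` by exactly `0` or `1`. -/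
theorem statement4 (n k : ℕ) (γ : KE n → ℤ × ℤ)
    (hk : zrank (Kt n) (Kh n) γ Finset.univ = k)
    (S : Finset (KE n)) (e : KE n) (he : e ∉ S) :
    fZ (Kt n) (Kh n) γ (insert e S) - fZ (Kt n) (Kh n) γ S = 0 ∨
    fZ (Kt n) (Kh n) γ (insert e S) - fZ (Kt n) (Kh n) γ S = 1 :=
  fZ_step (Kt n) (Kh n) γ S e he
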